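/- arXiv:1704.08186 — 2 statements merged into one kernel-verified Lean document; each statement's English description precedes it below -/
import Mathlib

section
/- Let a ∈ ℝ, β > 0, 0 < α ≤ 1 and t > 0. Then the power function t ↦ t^a is α-differentiable at t and 𝒟_M^{α,β}(t^a) = (a / Γ(β+1)) · t^{a−α}. -/
open Filter Topology

/-- One-parameter Mittag-Leffler function `E_β(x) = ∑_{k=0}^∞ x^k / Γ(βk+1)`. -/
noncomputable def mittagLeffler (β x : ℝ) : ℝ :=
  ∑' k : ℕ, x ^ k / Real.Gamma (β * k + 1)

/-- `f` has local M-derivative `L` of order `α` with parameter `β` at `t`, i.e.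
`lim_{ε→0} (f (t · E_β (ε t^{-α})) - f t)/ε = L`. -/
def HasLocalMDerivAt (α β : ℝ) (f : ℝ → ℝ) (t L : ℝ) : Prop :=
  Tendsto (fun ε : ℝ => (f (t * mittagLeffler β (ε * t ^ (-α))) - f t) / ε)
    (𝓝[≠] (0 : ℝ)) (𝓝 L)

/-- Gamma is at least 1/2 on `[1, ∞)`. -/
lemma gamma_ge_half {x : ℝ} (hx : 1 ≤ x) : (1/2 : ℝ) ≤ Real.Gamma x := by
  rcases le_or_gt 2 x with h2 | h2
  · have := Real.Gamma_strictMonoOn_Ici.monotoneOn (Set.mem_Ici.mpr le_rfl)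
      (Set.mem_Ici.mpr h2) h2
    rw [Real.Gamma_two] at this
    linarith
  · have hx0 : 0 < x := by linarith
    have h1 : Real.Gamma (x + 1) = x * Real.Gamma x := Real.Gamma_add_one hx0.ne'
    have h2' : (1 : ℝ) ≤ Real.Gamma (x + 1) := by
      rcases eq_or_lt_of_le (by linarith : (2:ℝ) ≤ x + 1) with h | h
      · rw [← h, Real.Gamma_two]
      · have := Real.Gamma_strictMonoOn_Ici (Set.mem_Ici.mpr le_rfl)
          (Set.mem_Ici.mpr (by linarith : (2:ℝ) ≤ x + 1)) h
        rw [Real.Gamma_two] at this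
        linarith
    have hG : 0 < Real.Gamma x := Real.Gamma_pos_of_pos hx0
    nlinarith

/-- `mittagLeffler β` as a formal power series. -/
noncomputable def mlSeries (β : ℝ) : FormalMultilinearSeries ℝ ℝ ℝ :=
  FormalMultilinearSeries.ofScalars ℝ (fun k => (Real.Gamma (β * k + 1))⁻¹)

lemma mlSeries_radius_pos {β : ℝ} (hβ : 0 < β) : 0 < (mlSeries β).radius := by
  have h : (mlSeries β).radius ≥ 1 := by
    apply FormalMultilinearSeries.le_radius_of_bound _ 2 (r := 1)
    intro n
    have h1 : (1 : ℝ) ≤ β * n + 1 := by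
      have : (0:ℝ) ≤ β * n := by positivity
      linarith
    have hG := gamma_ge_half h1
    have hGpos : 0 < Real.Gamma (β * n + 1) := Real.Gamma_pos_of_pos (by linarith)
    simp only [mlSeries, FormalMultilinearSeries.ofScalars_norm, NNReal.coe_one, one_pow, mul_one]
    rw [Real.norm_eq_abs, abs_of_pos (inv_pos.mpr hGpos)]
    rw [inv_le_comm₀ hGpos (by norm_num)]
    linarith
  exact lt_of_lt_of_le (by norm_num) h

lemma mittagLeffler_eq {β : ℝ} :
    mittagLeffler β = FormalMultilinearSeries.ofScalarsSum
      (fun k => (Real.Gamma (β * k + 1))⁻¹) := by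
  funext x
  rw [FormalMultilinearSeries.ofScalarsSum_eq_tsum, mittagLeffler]
  exact tsum_congr fun k => by rw [smul_eq_mul, div_eq_mul_inv, mul_comm]

lemma hasDerivAt_mittagLeffler {β : ℝ} (hβ : 0 < β) :
    HasDerivAt (mittagLeffler β) (Real.Gamma (β + 1))⁻¹ 0 := by
  have hps : HasFPowerSeriesAt (mittagLeffler β) (mlSeries β) 0 := by
    rw [mittagLeffler_eq]
    exact ((mlSeries β).hasFPowerSeriesOnBall (mlSeries_radius_pos hβ)).hasFPowerSeriesAt
  have := hps.hasDerivAt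
  have hc : (mlSeries β 1 fun _ => (1:ℝ)) = (Real.Gamma (β + 1))⁻¹ := by
    rw [mlSeries, FormalMultilinearSeries.ofScalars_apply_eq]
    norm_num
  rwa [hc] at this

lemma mittagLeffler_zero {β : ℝ} : mittagLeffler β 0 = 1 := by
  rw [mittagLeffler_eq, FormalMultilinearSeries.ofScalarsSum_zero]
  norm_num [Real.Gamma_one]

/-- `𝒟_M^{α,β}(t^a) = (a/Γ(β+1)) t^{a-α}`. -/
theorem stmt10 (a α β t : ℝ) (hα0 : 0 < α) (hα1 : α ≤ 1) (hβ : 0 < β) (ht : 0 < t) :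
    HasLocalMDerivAt α β (fun x : ℝ => x ^ a) t
      (a / Real.Gamma (β + 1) * t ^ (a - α)) := by
  set F : ℝ → ℝ := fun ε => (t * mittagLeffler β (ε * t ^ (-α))) ^ a with hF
  have hinner : HasDerivAt (fun ε : ℝ => ε * t ^ (-α)) (t ^ (-α)) 0 := by
    simpa using (hasDerivAt_id (0:ℝ)).mul_const (t ^ (-α))
  have hml : HasDerivAt (fun ε : ℝ => mittagLeffler β (ε * t ^ (-α)))
      ((Real.Gamma (β + 1))⁻¹ * t ^ (-α)) 0 := by
    have h00 : HasDerivAt (mittagLeffler β) (Real.Gamma (β + 1))⁻¹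
        ((fun ε : ℝ => ε * t ^ (-α)) 0) := by
      simpa using hasDerivAt_mittagLeffler hβ
    exact h00.comp 0 hinner
  have hG : HasDerivAt (fun ε : ℝ => t * mittagLeffler β (ε * t ^ (-α)))
      (t * ((Real.Gamma (β + 1))⁻¹ * t ^ (-α))) 0 := hml.const_mul t
  have hG0 : (fun ε : ℝ => t * mittagLeffler β (ε * t ^ (-α))) 0 = t := by
    simp [mittagLeffler_zero]
  have hpow : HasDerivAt (fun x : ℝ => x ^ a) (a * t ^ (a - 1)) t :=
    Real.hasDerivAt_rpow_const (Or.inl ht.ne')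
  have hFd : HasDerivAt F (a * t ^ (a - 1) * (t * ((Real.Gamma (β + 1))⁻¹ * t ^ (-α)))) 0 := by
    have hpow' : HasDerivAt (fun x : ℝ => x ^ a) (a * t ^ (a - 1))
        ((fun ε : ℝ => t * mittagLeffler β (ε * t ^ (-α))) 0) := by
      rw [hG0]; exact hpow
    exact hpow'.comp 0 hG
  have hL : a * t ^ (a - 1) * (t * ((Real.Gamma (β + 1))⁻¹ * t ^ (-α)))
      = a / Real.Gamma (β + 1) * t ^ (a - α) := by
    rw [show a - α = (a - 1) + 1 + (-α) by ring, Real.rpow_add ht, Real.rpow_add ht,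
      Real.rpow_one, div_eq_mul_inv]
    ring
  rw [HasLocalMDerivAt, ← hL]
  have := hasDerivAt_iff_tendsto_slope.mp hFd
  refine this.congr fun ε => ?_
  simp [slope_fun_def, hF, mittagLeffler_zero, sub_zero, div_eq_inv_mul]
end

section
/- Let 0 < α ≤ 1, β > 0 and t > 0. Then the function t ↦ e^{t^α/α} is α-differentiable at t and 𝒟_M^{α,β}(e^{t^α/α}) = e^{t^α/α} / Γ(β+1). -/
open Filter Topology

/-- A uniform positive lower bound on `Γ(βk+1)` over all `k : ℕ`. -/
lemma gamma_lb {β : ℝ} (hβ : 0 < β) :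
    ∃ c > 0, ∀ k : ℕ, c ≤ Real.Gamma (β * k + 1) := by
  obtain ⟨N, hN⟩ := exists_nat_ge (1 / β)
  refine ⟨min 1 ((Finset.range (N + 1)).inf' (by simp) fun k => Real.Gamma (β * k + 1)), ?_, ?_⟩
  · refine lt_min one_pos ((Finset.lt_inf'_iff _).mpr fun b _ => Real.Gamma_pos_of_pos ?_)
    positivity
  · intro k
    rcases le_or_gt k N with h | h
    · exact (min_le_right _ _).trans
        (Finset.inf'_le _ (Finset.mem_range.mpr (Nat.lt_succ_of_le h)))
    · refine (min_le_left _ _).trans ?_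
      have h1 : (1:ℝ) ≤ β * k := by
        rw [div_le_iff₀ hβ] at hN
        calc (1:ℝ) ≤ β * N := by linarith [mul_comm (N:ℝ) β]
        _ ≤ β * k := by
          have : (N:ℝ) ≤ k := by exact_mod_cast h.le
          nlinarith
      have h2 : (2:ℝ) ≤ β * k + 1 := by linarith
      calc (1:ℝ) = Real.Gamma 2 := Real.Gamma_two.symm
      _ ≤ Real.Gamma (β * k + 1) :=
        Real.Gamma_strictMonoOn_Ici.monotoneOn (by simp) h2 h2

lemma ml_summable {β : ℝ} (hβ : 0 < β) {x : ℝ} (hx : |x| < 1) :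
    Summable fun k : ℕ => x ^ k / Real.Gamma (β * k + 1) := by
  obtain ⟨c, hc, hle⟩ := gamma_lb hβ
  refine Summable.of_norm_bounded (g := fun k => |x| ^ k / c)
    ((summable_geometric_of_lt_one (abs_nonneg x) hx).div_const c) fun k => ?_
  rw [norm_div, norm_pow, Real.norm_eq_abs, Real.norm_eq_abs,
    abs_of_pos (lt_of_lt_of_le hc (hle k))]
  exact div_le_div_of_nonneg_left (by positivity) hc (hle k)

lemma ml_zero {β : ℝ} (hβ : 0 < β) : mittagLeffler β 0 = 1 := by
  rw [mittagLeffler, tsum_eq_single 0]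
  · simp [Real.Gamma_one]
  · intro k hk
    simp [zero_pow hk]

lemma ml_hasDerivAt {β : ℝ} (hβ : 0 < β) :
    HasDerivAt (mittagLeffler β) (1 / Real.Gamma (β + 1)) 0 := by
  obtain ⟨c, hc, hle⟩ := gamma_lb hβ
  have key : HasDerivAt (fun z => ∑' k : ℕ, z ^ k / Real.Gamma (β * k + 1))
      (∑' k : ℕ, (k : ℝ) * (0:ℝ) ^ (k - 1) / Real.Gamma (β * k + 1)) 0 := by
    refine hasDerivAt_tsum_of_isPreconnected
      (u := fun k : ℕ => (k : ℝ) * (1/2) ^ (k - 1) / c)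
      (t := Metric.ball (0:ℝ) (1/2)) (y₀ := 0) ?_ Metric.isOpen_ball
      (Convex.isPreconnected (convex_ball _ _))
      (fun k y _ => (hasDerivAt_pow k y).div_const _)
      (fun k y hy => ?_) (by simp) ?_ (by simp)
    · have : Summable fun k : ℕ => (k : ℝ) * (1/2) ^ (k-1) := by
        have h := summable_pow_mul_geometric_of_norm_lt_one (R := ℝ) 1
          (r := (1/2:ℝ)) (by norm_num)
        simp only [pow_one] at h
        refine (h.mul_left 2).of_nonneg_of_le (fun k => by positivity) fun k => ?_
        rcases k with _ | k
        · simp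
        · apply le_of_eq
          rw [Nat.succ_sub_one, pow_succ]
          push_cast
          ring
      exact this.div_const c
    · rw [Metric.mem_ball, Real.dist_0_eq_abs] at hy
      rw [Real.norm_eq_abs, abs_div, abs_mul, abs_pow, Nat.abs_cast,
        abs_of_pos (lt_of_lt_of_le hc (hle k))]
      refine div_le_div₀ (by positivity) ?_ hc (hle k)
      exact mul_le_mul_of_nonneg_left (pow_le_pow_left₀ (abs_nonneg y) hy.le _)
        (Nat.cast_nonneg k)
    · exact ml_summable hβ (by norm_num)
  have hsum : (∑' k : ℕ, (k : ℝ) * (0:ℝ) ^ (k - 1) / Real.Gamma (β * k + 1))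
      = 1 / Real.Gamma (β + 1) := by
    rw [tsum_eq_single 1]
    · norm_num
    · intro k hk
      rcases Nat.eq_zero_or_pos k with rfl | hk0
      · simp
      · have : k - 1 ≠ 0 := by omega
        simp [zero_pow this]
  rw [← hsum]
  exact key

/-- `𝒟_M^{α,β}(e^{t^α/α}) = e^{t^α/α}/Γ(β+1)`. -/
theorem stmt11 (α β t : ℝ) (hα0 : 0 < α) (hα1 : α ≤ 1) (hβ : 0 < β) (ht : 0 < t) :
    HasLocalMDerivAt α β (fun x : ℝ => Real.exp (x ^ α / α)) t
      (Real.exp (t ^ α / α) / Real.Gamma (β + 1)) := by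
  have htne : t ≠ 0 := ht.ne'
  -- inner function g ε = t * E_β (ε * t^(-α))
  have hinner : HasDerivAt (fun ε : ℝ => ε * t ^ (-α)) (t ^ (-α)) 0 := by
    simpa using (hasDerivAt_id (0:ℝ)).mul_const (t ^ (-α))
  have hE : HasDerivAt (mittagLeffler β) (1 / Real.Gamma (β + 1)) ((0:ℝ) * t ^ (-α)) := by
    rw [zero_mul]; exact ml_hasDerivAt hβ
  have hg : HasDerivAt (fun ε : ℝ => t * mittagLeffler β (ε * t ^ (-α)))
      (t * (1 / Real.Gamma (β + 1) * t ^ (-α))) 0 :=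
    by have := ((hE.comp 0 hinner)).const_mul t; exact this
  -- outer function f x = exp (x^α/α)
  have hrpow : HasDerivAt (fun x : ℝ => x ^ α / α) (α * t ^ (α - 1) / α) t :=
    (Real.hasDerivAt_rpow_const (Or.inl htne)).div_const α
  have hf : HasDerivAt (fun x : ℝ => Real.exp (x ^ α / α))
      (Real.exp (t ^ α / α) * (α * t ^ (α - 1) / α)) t := hrpow.exp
  -- g 0 = t
  have hg0 : t * mittagLeffler β ((0:ℝ) * t ^ (-α)) = t := by
    rw [zero_mul, ml_zero hβ, mul_one]
  have hf' : HasDerivAt (fun x : ℝ => Real.exp (x ^ α / α))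
      (Real.exp (t ^ α / α) * (α * t ^ (α - 1) / α))
      (t * mittagLeffler β ((0:ℝ) * t ^ (-α))) := by rw [hg0]; exact hf
  have hcomp := hf'.comp 0 hg
  -- simplify the derivative value
  have hval : Real.exp (t ^ α / α) * (α * t ^ (α - 1) / α) *
      (t * (1 / Real.Gamma (β + 1) * t ^ (-α)))
      = Real.exp (t ^ α / α) / Real.Gamma (β + 1) := by
    have h1 : t ^ (α - 1) * t ^ (-α) * t = 1 := by
      rw [← Real.rpow_add ht]
      have : α - 1 + -α = -1 := by ring
      rw [this, Real.rpow_neg_one, inv_mul_cancel₀ htne]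
    have hαne : α ≠ 0 := hα0.ne'
    field_simp
    nlinarith [h1, Real.exp_pos (t ^ α / α)]
  rw [hval] at hcomp
  -- convert HasDerivAt to the slope limit
  have := hasDerivAt_iff_tendsto_slope.mp hcomp
  refine this.congr fun ε => ?_
  simp [slope_def_field, Function.comp, ml_zero hβ, div_eq_inv_mul, mul_comm]
end
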